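/- A graph G on n vertices is a uniquely C4+-saturated graph with girth 4 if and only if G is a strongly regular graph with parameters (n, k, 0, 2) for some k. -/

import Mathlib

open SimpleGraph

/-- The diamond graph `C₄⁺`: a `4`-cycle with one chord, i.e. `K₄` minus an edge. -/
def diamond : SimpleGraph (Fin 4) := (⊤ : SimpleGraph (Fin 4)).deleteEdges {s(0, 1)}

/-- `G'` is a copy of `H` in `G`, i.e. a subgraph of `G` isomorphic to `H`. -/
def IsCopy {W V : Type*} (H : SimpleGraph W) {G : SimpleGraph V} (G' : G.Subgraph) : Prop :=
  Nonempty (G'.coe ≃g H)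

/-- `G` is uniquely `H`-saturated: `G` is `H`-free, and adding any non-edge
creates exactly one copy of `H`. -/
def UniquelySaturated {W V : Type*} (H : SimpleGraph W) (G : SimpleGraph V) : Prop :=
  (∀ G' : G.Subgraph, ¬ IsCopy H G') ∧
    ∀ u v : V, u ≠ v → ¬ G.Adj u v →
      ∃! G' : (G ⊔ SimpleGraph.fromEdgeSet {s(u, v)}).Subgraph, IsCopy H G'

lemma diamond_adj (i j : Fin 4) : diamond.Adj i j ↔ i ≠ j ∧ s(i, j) ≠ s(0, 1) := by
  simp [diamond, Set.mem_singleton_iff]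


def dAdj {V : Type*} (u v x y a b : V) : Prop :=
  (a = u ∧ b = v) ∨ (a = v ∧ b = u) ∨ (a = u ∧ b = x) ∨ (a = x ∧ b = u) ∨
  (a = u ∧ b = y) ∨ (a = y ∧ b = u) ∨ (a = v ∧ b = x) ∨ (a = x ∧ b = v) ∨
  (a = v ∧ b = y) ∨ (a = y ∧ b = v)

lemma isCopy_diamond_iff {V : Type*} {H : SimpleGraph V} (G' : H.Subgraph) :
    IsCopy diamond G' ↔ ∃ u v x y : V, u ≠ v ∧ u ≠ x ∧ u ≠ y ∧ v ≠ x ∧ v ≠ y ∧ x ≠ y ∧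
      G'.verts = {u, v, x, y} ∧ ∀ a b, G'.Adj a b ↔ dAdj u v x y a b := by
  constructor
  · rintro ⟨e⟩
    set f : Fin 4 → V := fun i => ((e.symm i : G'.verts) : V) with hf
    have hinj : Function.Injective f := fun i j h =>
      e.symm.injective (Subtype.coe_injective h)
    have hadj : ∀ i j, G'.Adj (f i) (f j) ↔ diamond.Adj i j := by
      intro i j
      rw [← Subgraph.coe_adj]
      exact e.symm.map_rel_iff
    refine ⟨f 2, f 3, f 0, f 1, ?_, ?_, ?_, ?_, ?_, ?_, ?_, ?_⟩
    · exact fun h => by simpa using hinj h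
    · exact fun h => by simpa using hinj h
    · exact fun h => by simpa using hinj h
    · exact fun h => by simpa using hinj h
    · exact fun h => by simpa using hinj h
    · exact fun h => by simpa using hinj h
    · ext w
      constructor
      · intro hw
        obtain ⟨i, hi⟩ : ∃ i, e.symm i = ⟨w, hw⟩ := ⟨e ⟨w, hw⟩, e.symm_apply_apply _⟩
        have : f i = w := by rw [hf]; simp [hi]
        fin_cases i <;> simp_all
      · intro hw
        rcases hw with h | h | h | h <;>
          · subst h; exact (e.symm _).2
    · intro a b
      constructor
      · intro hab
        have ha : a ∈ G'.verts := G'.edge_vert hab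
        have hb : b ∈ G'.verts := G'.edge_vert hab.symm
        obtain ⟨i, hi⟩ : ∃ i, e.symm i = ⟨a, ha⟩ := ⟨e ⟨a, ha⟩, e.symm_apply_apply _⟩
        obtain ⟨j, hj⟩ : ∃ j, e.symm j = ⟨b, hb⟩ := ⟨e ⟨b, hb⟩, e.symm_apply_apply _⟩
        have hia : f i = a := by rw [hf]; simp [hi]
        have hjb : f j = b := by rw [hf]; simp [hj]
        subst hia hjb
        have hd : diamond.Adj i j := (hadj i j).mp hab
        rw [diamond_adj] at hd
        unfold dAdj
        fin_cases i <;> fin_cases j <;> simp_all [Sym2.eq_iff, hinj.eq_iff]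
      · intro hab
        unfold dAdj at hab
        rcases hab with ⟨ha, hb⟩|⟨ha, hb⟩|⟨ha, hb⟩|⟨ha, hb⟩|⟨ha, hb⟩|⟨ha, hb⟩|⟨ha, hb⟩|⟨ha, hb⟩|⟨ha, hb⟩|⟨ha, hb⟩ <;>
          (subst ha; subst hb; rw [hadj, diamond_adj]; refine ⟨by decide, by decide⟩)
  · rintro ⟨u, v, x, y, huv, hux, huy, hvx, hvy, hxy, hverts, hadj⟩
    have hmem : ∀ i, (![x, y, u, v] : Fin 4 → V) i ∈ G'.verts := by
      rw [hverts]
      intro i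
      fin_cases i <;> simp
    have hginj : Function.Injective (![x, y, u, v] : Fin 4 → V) := by
      intro i j hij
      fin_cases i <;> fin_cases j <;> simp_all <;> simp_all [eq_comm]
    have hsurj : Function.Surjective
        (fun i => (⟨(![x, y, u, v] : Fin 4 → V) i, hmem i⟩ : G'.verts)) := by
      rintro ⟨b, hb⟩
      rw [hverts] at hb
      simp only [Set.mem_insert_iff, Set.mem_singleton_iff] at hb
      rcases hb with h | h | h | h
      · exact ⟨2, Subtype.ext (by simp [h])⟩
      · exact ⟨3, Subtype.ext (by simp [h])⟩
      · exact ⟨0, Subtype.ext (by simp [h])⟩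
      · exact ⟨1, Subtype.ext (by simp [h])⟩
    have hbij : Function.Bijective
        (fun i => (⟨(![x, y, u, v] : Fin 4 → V) i, hmem i⟩ : G'.verts)) :=
      ⟨fun i j hij => hginj (congrArg Subtype.val hij), hsurj⟩
    refine ⟨(RelIso.mk (Equiv.ofBijective _ hbij) ?_ : diamond ≃g G'.coe).symm⟩
    intro i j
    show G'.Adj _ _ ↔ diamond.Adj i j
    rw [hadj, diamond_adj]
    unfold dAdj
    fin_cases i <;> fin_cases j <;>
      simp_all [Sym2.eq_iff, huv.symm, hux.symm, huy.symm, hvx.symm, hvy.symm, hxy.symm]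

set_option maxHeartbeats 1000000 in
lemma dAdj_comm_uv {V : Type*} (u v x y a b : V) : dAdj v u x y a b ↔ dAdj u v x y a b := by
  unfold dAdj; constructor <;> rintro (h|h|h|h|h|h|h|h|h|h) <;> tauto

set_option maxHeartbeats 1000000 in
lemma dAdj_comm_xy {V : Type*} (u v x y a b : V) : dAdj u v y x a b ↔ dAdj u v x y a b := by
  unfold dAdj; constructor <;> rintro (h|h|h|h|h|h|h|h|h|h) <;> tauto

lemma dAdj_symm {V : Type*} {u v x y a b : V} (h : dAdj u v x y a b) : dAdj u v x y b a := by
  unfold dAdj at *; tauto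

lemma dAdj_mem_left {V : Type*} {u v x y a b : V} (h : dAdj u v x y a b) :
    a ∈ ({u, v, x, y} : Set V) := by
  rcases h with ⟨rfl, -⟩|⟨rfl, -⟩|⟨rfl, -⟩|⟨rfl, -⟩|⟨rfl, -⟩|⟨rfl, -⟩|⟨rfl, -⟩|⟨rfl, -⟩|⟨rfl, -⟩|⟨rfl, -⟩ <;> simp

def dSub {V : Type*} (H : SimpleGraph V) (u v x y : V) : H.Subgraph where
  verts := {u, v, x, y}
  Adj a b := H.Adj a b ∧ dAdj u v x y a b
  adj_sub h := h.1
  edge_vert h := dAdj_mem_left h.2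
  symm := ⟨fun a b h => ⟨h.1.symm, dAdj_symm h.2⟩⟩

@[simp] lemma dSub_verts {V : Type*} (H : SimpleGraph V) (u v x y : V) :
    (dSub H u v x y).verts = {u, v, x, y} := rfl

@[simp] lemma dSub_adj {V : Type*} (H : SimpleGraph V) (u v x y a b : V) :
    (dSub H u v x y).Adj a b ↔ H.Adj a b ∧ dAdj u v x y a b := Iff.rfl

lemma dSub_comm_xy {V : Type*} (H : SimpleGraph V) (u v x y : V) :
    dSub H u v x y = dSub H u v y x := by
  apply SimpleGraph.Subgraph.ext
  · show ({u, v, x, y} : Set V) = {u, v, y, x}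
    rw [Set.pair_comm x y]
  · ext a b
    simp [dAdj_comm_xy]

lemma no_copy_of_triangleFree {V : Type*} {G : SimpleGraph V}
    (TF : ∀ a b c, G.Adj a b → G.Adj b c → G.Adj a c → False) (G' : G.Subgraph) :
    ¬ IsCopy diamond G' := by
  rw [isCopy_diamond_iff]
  rintro ⟨u, v, x, y, -, -, -, -, -, -, -, hadj⟩
  have h1 : G.Adj u v := G'.adj_sub ((hadj u v).mpr (by unfold dAdj; tauto))
  have h2 : G.Adj v x := G'.adj_sub ((hadj v x).mpr (by unfold dAdj; tauto))
  have h3 : G.Adj u x := G'.adj_sub ((hadj u x).mpr (by unfold dAdj; tauto))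
  exact TF u v x h1 h2 h3

lemma dAdj_imp_adj {V : Type*} {H : SimpleGraph V} {u v x y a b : V}
    (h1 : H.Adj u v) (h2 : H.Adj u x) (h3 : H.Adj u y) (h4 : H.Adj v x) (h5 : H.Adj v y)
    (h : dAdj u v x y a b) : H.Adj a b := by
  rcases h with ⟨rfl,rfl⟩|⟨rfl,rfl⟩|⟨rfl,rfl⟩|⟨rfl,rfl⟩|⟨rfl,rfl⟩|⟨rfl,rfl⟩|⟨rfl,rfl⟩|⟨rfl,rfl⟩|⟨rfl,rfl⟩|⟨rfl,rfl⟩ <;>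
    first
      | assumption
      | exact h1.symm
      | exact h2.symm
      | exact h3.symm
      | exact h4.symm
      | exact h5.symm

lemma eq_dSub {V : Type*} {H : SimpleGraph V} {G' : H.Subgraph} {u v x y : V}
    (h1 : H.Adj u v) (h2 : H.Adj u x) (h3 : H.Adj u y) (h4 : H.Adj v x) (h5 : H.Adj v y)
    (hverts : G'.verts = {u, v, x, y}) (hadj : ∀ a b, G'.Adj a b ↔ dAdj u v x y a b) :
    G' = dSub H u v x y := by
  apply SimpleGraph.Subgraph.ext
  · exact hverts
  · ext a b
    rw [hadj, dSub_adj]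
    exact ⟨fun h => ⟨dAdj_imp_adj h1 h2 h3 h4 h5 h, h⟩, fun h => h.2⟩

lemma isCopy_dSub {V : Type*} {H : SimpleGraph V} {u v x y : V}
    (h1 : H.Adj u v) (h2 : H.Adj u x) (h3 : H.Adj u y) (h4 : H.Adj v x) (h5 : H.Adj v y)
    (hxy : x ≠ y) : IsCopy diamond (dSub H u v x y) := by
  rw [isCopy_diamond_iff]
  exact ⟨u, v, x, y, h1.ne, h2.ne, h3.ne, h4.ne, h5.ne, hxy, rfl,
    fun a b => ⟨fun h => h.2, fun h => ⟨dAdj_imp_adj h1 h2 h3 h4 h5 h, h⟩⟩⟩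

lemma sup_edge_adj {V : Type*} (G : SimpleGraph V) {u v : V} (hne : u ≠ v) (a b : V) :
    (G ⊔ fromEdgeSet {s(u, v)}).Adj a b ↔ G.Adj a b ∨ (a = u ∧ b = v) ∨ (a = v ∧ b = u) := by
  simp only [sup_adj, fromEdgeSet_adj, Set.mem_singleton_iff, Sym2.eq_iff]
  constructor
  · rintro (h | ⟨⟨rfl, rfl⟩ | ⟨rfl, rfl⟩, -⟩) <;> tauto
  · rintro (h | ⟨rfl, rfl⟩ | ⟨rfl, rfl⟩)
    · tauto
    · exact Or.inr ⟨Or.inl ⟨rfl, rfl⟩, hne⟩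
    · exact Or.inr ⟨Or.inr ⟨rfl, rfl⟩, hne.symm⟩

set_option maxHeartbeats 1600000 in
lemma copy_in_add_iff {V : Type*} {G : SimpleGraph V}
    (TF : ∀ a b c, G.Adj a b → G.Adj b c → G.Adj a c → False)
    {u v : V} (hne : u ≠ v)
    (G' : (G ⊔ fromEdgeSet {s(u, v)}).Subgraph) :
    IsCopy diamond G' ↔ ∃ x y : V, x ≠ y ∧ x ∈ G.commonNeighbors u v ∧
      y ∈ G.commonNeighbors u v ∧ G' = dSub _ u v x y := by
  have hH : ∀ a b : V, (G ⊔ fromEdgeSet {s(u, v)}).Adj a b ↔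
      G.Adj a b ∨ (a = u ∧ b = v) ∨ (a = v ∧ b = u) := sup_edge_adj G hne
  constructor
  · rw [isCopy_diamond_iff]
    rintro ⟨u', v', x', y', hu'v', hu'x', hu'y', hv'x', hv'y', hx'y', hverts, hadj⟩
    have h1 : (G ⊔ fromEdgeSet {s(u, v)}).Adj u' v' :=
      G'.adj_sub ((hadj _ _).mpr (Or.inl ⟨rfl, rfl⟩))
    have h2 : (G ⊔ fromEdgeSet {s(u, v)}).Adj u' x' :=
      G'.adj_sub ((hadj _ _).mpr (Or.inr (Or.inr (Or.inl ⟨rfl, rfl⟩))))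
    have h3 : (G ⊔ fromEdgeSet {s(u, v)}).Adj u' y' :=
      G'.adj_sub ((hadj _ _).mpr (Or.inr (Or.inr (Or.inr (Or.inr (Or.inl ⟨rfl, rfl⟩))))))
    have h4 : (G ⊔ fromEdgeSet {s(u, v)}).Adj v' x' :=
      G'.adj_sub ((hadj _ _).mpr (Or.inr (Or.inr (Or.inr (Or.inr (Or.inr (Or.inr (Or.inl ⟨rfl, rfl⟩))))))))
    have h5 : (G ⊔ fromEdgeSet {s(u, v)}).Adj v' y' :=
      G'.adj_sub ((hadj _ _).mpr (Or.inr (Or.inr (Or.inr (Or.inr (Or.inr (Or.inr (Or.inr (Or.inr (Or.inl ⟨rfl, rfl⟩))))))))))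
    have g1 := (hH _ _).mp h1
    have g2 := (hH _ _).mp h2
    have g3 := (hH _ _).mp h3
    have g4 := (hH _ _).mp h4
    have g5 := (hH _ _).mp h5
    have ht1 : (u' = u ∧ v' = v) ∨ (u' = v ∧ v' = u) ∨ (u' = u ∧ x' = v) ∨ (u' = v ∧ x' = u) ∨
        (v' = u ∧ x' = v) ∨ (v' = v ∧ x' = u) := by
      rcases g1 with h1' | h1'
      · rcases g2 with h2' | h2'
        · rcases g4 with h4' | h4'
          · exact absurd h4' (fun h => TF u' v' x' h1' h h2')
          · rcases h4' with h | h
            · exact Or.inr (Or.inr (Or.inr (Or.inr (Or.inl h))))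
            · exact Or.inr (Or.inr (Or.inr (Or.inr (Or.inr h))))
        · rcases h2' with h | h
          · exact Or.inr (Or.inr (Or.inl h))
          · exact Or.inr (Or.inr (Or.inr (Or.inl h)))
      · rcases h1' with h | h
        · exact Or.inl h
        · exact Or.inr (Or.inl h)
    have ht2 : (u' = u ∧ v' = v) ∨ (u' = v ∧ v' = u) ∨ (u' = u ∧ y' = v) ∨ (u' = v ∧ y' = u) ∨
        (v' = u ∧ y' = v) ∨ (v' = v ∧ y' = u) := by
      rcases g1 with h1' | h1'
      · rcases g3 with h3' | h3'
        · rcases g5 with h5' | h5'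
          · exact absurd h5' (fun h => TF u' v' y' h1' h h3')
          · rcases h5' with h | h
            · exact Or.inr (Or.inr (Or.inr (Or.inr (Or.inl h))))
            · exact Or.inr (Or.inr (Or.inr (Or.inr (Or.inr h))))
        · rcases h3' with h | h
          · exact Or.inr (Or.inr (Or.inl h))
          · exact Or.inr (Or.inr (Or.inr (Or.inl h)))
      · rcases h1' with h | h
        · exact Or.inl h
        · exact Or.inr (Or.inl h)
    have key : (u' = u ∧ v' = v) ∨ (u' = v ∧ v' = u) := by
      clear hadj hH h1 h2 h3 h4 h5 g1 g2 g3 g4 g5 TF hverts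
      rcases ht1 with h | h | ⟨e1, e2⟩ | ⟨e1, e2⟩ | ⟨e1, e2⟩ | ⟨e1, e2⟩
      · exact Or.inl h
      · exact Or.inr h
      all_goals
        rcases ht2 with h' | h' | ⟨e3, e4⟩ | ⟨e3, e4⟩ | ⟨e3, e4⟩ | ⟨e3, e4⟩ <;> simp_all
    rcases key with ⟨rfl, rfl⟩ | ⟨rfl, rfl⟩
    · -- here u and v got replaced by u' and v'
      have c2 : G.Adj u' x' := by
        rcases g2 with h | ⟨-, rfl⟩ | ⟨rfl, -⟩
        · exact h
        · exact absurd rfl hv'x'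
        · exact absurd rfl hne
      have c3 : G.Adj u' y' := by
        rcases g3 with h | ⟨-, rfl⟩ | ⟨rfl, -⟩
        · exact h
        · exact absurd rfl hv'y'
        · exact absurd rfl hne
      have c4 : G.Adj v' x' := by
        rcases g4 with h | ⟨rfl, -⟩ | ⟨-, rfl⟩
        · exact h
        · exact absurd rfl hne
        · exact absurd rfl hu'x'
      have c5 : G.Adj v' y' := by
        rcases g5 with h | ⟨rfl, -⟩ | ⟨-, rfl⟩
        · exact h
        · exact absurd rfl hne
        · exact absurd rfl hu'y'
      exact ⟨x', y', hx'y', (mem_commonNeighbors G).mpr ⟨c2, c4⟩,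
        (mem_commonNeighbors G).mpr ⟨c3, c5⟩, eq_dSub h1 h2 h3 h4 h5 hverts hadj⟩
    · -- here u got replaced by v' and v by u'
      have c2 : G.Adj u' x' := by
        rcases g2 with h | ⟨h, -⟩ | ⟨-, h⟩
        · exact h
        · exact absurd h hne.symm
        · exact absurd h hv'x'.symm
      have c3 : G.Adj u' y' := by
        rcases g3 with h | ⟨h, -⟩ | ⟨-, h⟩
        · exact h
        · exact absurd h hne.symm
        · exact absurd h hv'y'.symm
      have c4 : G.Adj v' x' := by
        rcases g4 with h | ⟨-, h⟩ | ⟨h, -⟩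
        · exact h
        · exact absurd h hu'x'.symm
        · exact absurd h hne
      have c5 : G.Adj v' y' := by
        rcases g5 with h | ⟨-, h⟩ | ⟨h, -⟩
        · exact h
        · exact absurd h hu'y'.symm
        · exact absurd h hne
      refine ⟨x', y', hx'y', (mem_commonNeighbors G).mpr ⟨c4, c2⟩,
        (mem_commonNeighbors G).mpr ⟨c5, c3⟩, eq_dSub h1.symm h4 h5 h2 h3 ?_ ?_⟩
      · rw [hverts]
        show insert u' (insert v' _) = insert v' (insert u' _)
        rw [Set.insert_comm]
      · intro a b
        rw [hadj a b, ← dAdj_comm_uv]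
  · rintro ⟨x, y, hxy, hx, hy, rfl⟩
    rw [mem_commonNeighbors] at hx hy
    exact isCopy_dSub ((hH u v).mpr (Or.inr (Or.inl ⟨rfl, rfl⟩)))
      ((hH u x).mpr (Or.inl hx.1)) ((hH u y).mpr (Or.inl hy.1))
      ((hH v x).mpr (Or.inl hx.2)) ((hH v y).mpr (Or.inl hy.2)) hxy

lemma triangle_of_walk3 {V : Type*} {G : SimpleGraph V} {a : V} (w : G.Walk a a)
    (h3 : w.length = 3) : ∃ b c, G.Adj a b ∧ G.Adj b c ∧ G.Adj a c := by
  cases w with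
  | nil => simp at h3
  | cons h p =>
    cases p with
    | nil => simp at h3
    | cons h2 q =>
      cases q with
      | nil => simp at h3
      | cons h3' r =>
        simp only [Walk.length_cons] at h3
        have : r.length = 0 := by omega
        have := Walk.eq_of_length_eq_zero this
        subst this
        exact ⟨_, _, h, h2, h3'.symm⟩

lemma cycle4 {V : Type*} {G : SimpleGraph V} {u v x y : V}
    (h1 : G.Adj u x) (h2 : G.Adj x v) (h3 : G.Adj v y) (h4 : G.Adj y u)
    (huv : u ≠ v) (hxy : x ≠ y) :
    ∃ (w : G.Walk u u), w.IsCycle ∧ w.length = 4 := by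
  refine ⟨Walk.cons h1 (Walk.cons h2 (Walk.cons h3 (Walk.cons h4 Walk.nil))), ?_, rfl⟩
  have n1 : u ≠ x := h1.ne
  have n2 : x ≠ v := h2.ne
  have n3 : v ≠ y := h3.ne
  have n4 : y ≠ u := h4.ne
  rw [Walk.isCycle_def, Walk.isTrail_def]
  refine ⟨?_, by simp, ?_⟩ <;> simp [Sym2.eq_iff] <;> push_neg <;> tauto

lemma cycle3 {V : Type*} {G : SimpleGraph V} {a b c : V}
    (h1 : G.Adj a b) (h2 : G.Adj b c) (h3 : G.Adj a c) :
    ∃ (w : G.Walk a a), w.IsCycle ∧ w.length = 3 := by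
  refine ⟨Walk.cons h1 (Walk.cons h2 (Walk.cons h3.symm Walk.nil)), ?_, rfl⟩
  have n1 : a ≠ b := h1.ne
  have n2 : b ≠ c := h2.ne
  have n3 : a ≠ c := h3.ne
  rw [Walk.isCycle_def, Walk.isTrail_def]
  refine ⟨?_, by simp, ?_⟩ <;> simp [Sym2.eq_iff] <;> push_neg <;> tauto

lemma egirth_le_len {V : Type*} {G : SimpleGraph V} {a : V} (w : G.Walk a a) (hw : w.IsCycle) :
    G.egirth ≤ (w.length : ℕ∞) := by
  apply iInf_le_of_le a
  apply iInf_le_of_le w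
  exact iInf_le _ hw

lemma girth_eq_four' {V : Type*} {G : SimpleGraph V}
    (TF : ∀ a b c, G.Adj a b → G.Adj b c → G.Adj a c → False)
    {u v x y : V} (h1 : G.Adj u x) (h2 : G.Adj x v) (h3 : G.Adj v y) (h4 : G.Adj y u)
    (huv : u ≠ v) (hxy : x ≠ y) : G.girth = 4 := by
  obtain ⟨w, hw, hlen⟩ := cycle4 h1 h2 h3 h4 huv hxy
  have hle : G.egirth ≤ 4 := by
    have := egirth_le_len w hw
    rw [hlen] at this
    exact_mod_cast this
  have hge : (4 : ℕ∞) ≤ G.egirth := by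
    rw [le_egirth]
    intro a w' hw'
    have h3' := hw'.three_le_length
    rcases Nat.lt_or_ge w'.length 4 with hl | hl
    · have hl3 : w'.length = 3 := by omega
      obtain ⟨b, c, hab, hbc, hac⟩ := triangle_of_walk3 w' hl3
      exact absurd hac (fun h => TF a b c hab hbc h)
    · exact_mod_cast hl
  have he : G.egirth = 4 := le_antisymm hle hge
  show G.egirth.toNat = 4
  rw [he]
  rfl

lemma tf_of_girth4 {V : Type*} {G : SimpleGraph V} (h : G.girth = 4) :
    ∀ a b c, G.Adj a b → G.Adj b c → G.Adj a c → False := by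
  intro a b c hab hbc hac
  obtain ⟨w, hw, hlen⟩ := cycle3 hab hbc hac
  have h1 : G.egirth ≤ 3 := by
    have := egirth_le_len w hw
    rw [hlen] at this
    exact_mod_cast this
  have h2 : G.girth ≤ 3 := by
    have := ENat.toNat_le_toNat h1 (by simp)
    simpa [girth] using this
  omega

lemma three_le_card_of_cycle {V : Type*} [Fintype V] {G : SimpleGraph V} {a : V}
    (w : G.Walk a a) (hw : w.IsCycle) : 3 ≤ Fintype.card V := by
  have h1 := hw.three_le_length
  have h2 : w.support.tail.Nodup := hw.support_nodup
  have h3 := h2.length_le_card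
  have h4 : w.support.length = w.length + 1 := Walk.length_support w
  have h5 : w.support.tail.length = w.length := by
    rw [List.length_tail, h4]
    omega
  omega

lemma pair_of_card_two {V : Type*} {S : Set V} [Fintype S] (h : Fintype.card S = 2) :
    ∃ s t, s ≠ t ∧ S = {s, t} := by
  have h1 : S.ncard = 2 := by
    rw [Set.ncard_eq_toFinset_card', Set.toFinset_card]
    exact h
  exact Set.ncard_eq_two.mp h1

lemma mem_pair_unique {V : Type*} {S : Set V} {s t c : V} (hS : S = {s, t}) (hst : s ≠ t)
    (hc : c ∈ S) : ∃! w, w ∈ S ∧ w ≠ c := by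
  subst hS
  rcases hc with rfl | hc
  · refine ⟨t, ⟨Or.inr rfl, hst.symm⟩, ?_⟩
    rintro w ⟨hw | hw, hwc⟩
    · exact absurd hw hwc
    · exact hw
  · rw [Set.mem_singleton_iff] at hc
    subst hc
    refine ⟨s, ⟨Or.inl rfl, hst⟩, ?_⟩
    rintro w ⟨hw | hw, hwc⟩
    · exact hw
    · rw [Set.mem_singleton_iff] at hw
      exact absurd hw hwc

section deg

variable {V : Type*} [Fintype V] {G : SimpleGraph V} [DecidableRel G.Adj]

lemma cn_pair (hμ : ∀ a b : V, a ≠ b → ¬G.Adj a b → Fintype.card (G.commonNeighbors a b) = 2)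
    {a b : V} (hab : a ≠ b) (hnadj : ¬G.Adj a b) :
    ∃ s t : V, s ≠ t ∧ G.commonNeighbors a b = {s, t} :=
  pair_of_card_two (hμ a b hab hnadj)

lemma cn_other (hμ : ∀ a b : V, a ≠ b → ¬G.Adj a b → Fintype.card (G.commonNeighbors a b) = 2)
    {a b c : V} (hab : a ≠ b) (hnadj : ¬G.Adj a b) (hc : c ∈ G.commonNeighbors a b) :
    ∃! w, w ∈ G.commonNeighbors a b ∧ w ≠ c := by
  obtain ⟨s, t, hst, hS⟩ := cn_pair hμ hab hnadj
  exact mem_pair_unique hS hst hc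

lemma deg_eq_of_adj (TF : ∀ a b c, G.Adj a b → G.Adj b c → G.Adj a c → False)
    (hμ : ∀ a b : V, a ≠ b → ¬G.Adj a b → Fintype.card (G.commonNeighbors a b) = 2)
    {u v : V} (huv : G.Adj u v) : G.degree u = G.degree v := by
  classical
  have aux : ∀ {p q : V}, G.Adj p q → ∀ x ∈ (G.neighborFinset p).erase q,
      ∃! w, w ∈ G.commonNeighbors x q ∧ w ≠ p := by
    intro p q hpq x hx
    obtain ⟨hxq, hxp⟩ := Finset.mem_erase.mp hx
    rw [mem_neighborFinset] at hxp
    have hnadj : ¬G.Adj x q := fun h => TF p x q hxp h hpq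
    exact cn_other hμ hxq hnadj ((mem_commonNeighbors G).mpr ⟨hxp.symm, hpq.symm⟩)
  have key : ∀ {p q : V}, G.Adj p q →
      ((G.neighborFinset p).erase q).card = ((G.neighborFinset q).erase p).card := by
    intro p q hpq
    apply Finset.card_bij (i := fun x hx => ((aux hpq x hx).exists).choose)
    · intro x hx
      obtain ⟨hw, hwp⟩ := ((aux hpq x hx).exists).choose_spec
      rw [mem_commonNeighbors] at hw
      exact Finset.mem_erase.mpr ⟨hwp, (mem_neighborFinset _ _ _).mpr hw.2⟩
    · intro x₁ hx₁ x₂ hx₂ heq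
      set w := ((aux hpq x₁ hx₁).exists).choose with hwdef
      obtain ⟨hw1, hwp1⟩ := ((aux hpq x₁ hx₁).exists).choose_spec
      obtain ⟨hw2, hwp2⟩ := ((aux hpq x₂ hx₂).exists).choose_spec
      rw [← heq] at hw2
      rw [mem_commonNeighbors] at hw1 hw2
      -- w is a common neighbor of x₁, x₂ and q; both x₁, x₂ are in CN w p, as is q
      have hwp : ¬G.Adj w p := fun h => TF q w p hw1.2 h hpq.symm
      have hq : q ∈ G.commonNeighbors w p := (mem_commonNeighbors G).mpr ⟨hw1.2.symm, hpq⟩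
      have hex := cn_other hμ hwp1 hwp hq
      obtain ⟨hx₁q, hx₁p⟩ := Finset.mem_erase.mp hx₁
      obtain ⟨hx₂q, hx₂p⟩ := Finset.mem_erase.mp hx₂
      rw [mem_neighborFinset] at hx₁p hx₂p
      exact hex.unique ⟨(mem_commonNeighbors G).mpr ⟨hw1.1.symm, hx₁p⟩, hx₁q⟩
        ⟨(mem_commonNeighbors G).mpr ⟨hw2.1.symm, hx₂p⟩, hx₂q⟩
    · intro w hw
      obtain ⟨hwp, hwq⟩ := Finset.mem_erase.mp hw
      rw [mem_neighborFinset] at hwq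
      have hnadj : ¬G.Adj w p := fun h => TF q w p hwq h hpq.symm
      have hq : q ∈ G.commonNeighbors w p := (mem_commonNeighbors G).mpr ⟨hwq.symm, hpq⟩
      have hex := cn_other hμ hwp hnadj hq
      set x := (hex.exists).choose with hxdef
      obtain ⟨hx1, hx2⟩ := (hex.exists).choose_spec
      rw [mem_commonNeighbors] at hx1
      have hxs : x ∈ (G.neighborFinset p).erase q :=
        Finset.mem_erase.mpr ⟨hx2, (mem_neighborFinset _ _ _).mpr hx1.2⟩
      refine ⟨x, hxs, ?_⟩
      obtain ⟨hc1, hc2⟩ := ((aux hpq x hxs).exists).choose_spec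
      exact (aux hpq x hxs).unique ⟨hc1, hc2⟩
        ⟨(mem_commonNeighbors G).mpr ⟨hx1.1.symm, hwq⟩, hwp⟩
  have h1 := key huv
  have e1 : ((G.neighborFinset u).erase v).card = G.degree u - 1 :=
    by rw [Finset.card_erase_of_mem ((mem_neighborFinset _ _ _).mpr huv)]; rfl
  have e2 : ((G.neighborFinset v).erase u).card = G.degree v - 1 :=
    by rw [Finset.card_erase_of_mem ((mem_neighborFinset _ _ _).mpr huv.symm)]; rfl
  have p1 : 0 < G.degree u := Finset.card_pos.mpr ⟨v, (mem_neighborFinset _ _ _).mpr huv⟩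
  have p2 : 0 < G.degree v := Finset.card_pos.mpr ⟨u, (mem_neighborFinset _ _ _).mpr huv.symm⟩
  omega

lemma deg_eq (TF : ∀ a b c, G.Adj a b → G.Adj b c → G.Adj a c → False)
    (hμ : ∀ a b : V, a ≠ b → ¬G.Adj a b → Fintype.card (G.commonNeighbors a b) = 2)
    (u v : V) : G.degree u = G.degree v := by
  by_cases h : u = v
  · rw [h]
  by_cases hadj : G.Adj u v
  · exact deg_eq_of_adj TF hμ hadj
  · have hpos : 0 < Fintype.card (G.commonNeighbors u v) := by
      rw [hμ u v h hadj]; omega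
    obtain ⟨⟨w, hw⟩⟩ := Fintype.card_pos_iff.mp hpos
    rw [mem_commonNeighbors] at hw
    exact (deg_eq_of_adj TF hμ hw.1).trans (deg_eq_of_adj TF hμ hw.2.symm)

end deg

lemma exists_unique_iff_card {V : Type*} [Fintype V] {G : SimpleGraph V} [DecidableRel G.Adj]
    (TF : ∀ a b c, G.Adj a b → G.Adj b c → G.Adj a c → False)
    {u v : V} (hne : u ≠ v) (hnadj : ¬G.Adj u v) :
    (∃! G' : (G ⊔ fromEdgeSet {s(u, v)}).Subgraph, IsCopy diamond G') ↔
      Fintype.card (G.commonNeighbors u v) = 2 := by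
  constructor
  · rintro ⟨C, hC, huniq⟩
    obtain ⟨x, y, hxy, hx, hy, hCeq⟩ := (copy_in_add_iff TF hne C).mp hC
    have hSet : G.commonNeighbors u v = {x, y} := by
      apply Set.eq_of_subset_of_subset
      · intro z hz
        by_contra hznot
        simp only [Set.mem_insert_iff, Set.mem_singleton_iff, not_or] at hznot
        obtain ⟨hzx, hzy⟩ := hznot
        have hD : IsCopy diamond (dSub _ u v x z) :=
          (copy_in_add_iff TF hne _).mpr ⟨x, z, fun h => hzx h.symm, hx, hz, rfl⟩
        have h1 : dSub _ u v x z = C := huniq _ hD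
        have h2 := h1.trans hCeq
        have h3 := congrArg SimpleGraph.Subgraph.verts h2
        simp only [dSub_verts] at h3
        have hzmem : z ∈ ({u, v, x, y} : Set V) := by
          rw [← h3]; simp
        have hzu : z ≠ u := fun h => G.loopless.irrefl u (h ▸ ((mem_commonNeighbors G).mp hz).1)
        have hzv : z ≠ v := fun h => G.loopless.irrefl v (h ▸ ((mem_commonNeighbors G).mp hz).2)
        rcases hzmem with h | h | h | h
        · exact hzu h
        · exact hzv h
        · exact hzx h
        · exact hzy h
      · rintro z (rfl | rfl)
        · exact hx
        · exact hy
    have h2 : (G.commonNeighbors u v).ncard = 2 := Set.ncard_eq_two.mpr ⟨x, y, hxy, hSet⟩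
    rw [Set.ncard_eq_toFinset_card', Set.toFinset_card] at h2
    exact h2
  · intro hcard
    obtain ⟨x, y, hxy, hS⟩ := pair_of_card_two hcard
    have hx : x ∈ G.commonNeighbors u v := by rw [hS]; simp
    have hy : y ∈ G.commonNeighbors u v := by rw [hS]; simp
    refine ⟨dSub _ u v x y, (copy_in_add_iff TF hne _).mpr ⟨x, y, hxy, hx, hy, rfl⟩, ?_⟩
    intro C hC
    obtain ⟨x', y', hxy', hx', hy', hCeq⟩ := (copy_in_add_iff TF hne C).mp hC
    rw [hS] at hx' hy'
    have hx'' : x' = x ∨ x' = y := by simpa using hx'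
    have hy'' : y' = x ∨ y' = y := by simpa using hy'
    rcases hx'' with rfl | rfl <;> rcases hy'' with rfl | rfl <;>
      first
        | exact absurd rfl hxy'
        | exact hCeq
        | exact hCeq.trans (dSub_comm_xy _ _ _ _ _)

theorem stmt4 {V : Type*} [Fintype V] (G : SimpleGraph V) [DecidableRel G.Adj] :
    (UniquelySaturated diamond G ∧ G.girth = 4) ↔
      (∃ k : ℕ, G.IsSRGWith (Fintype.card V) k 0 2 ∧ G ≠ ⊤ ∧ G ≠ ⊥) := by
  constructor
  · rintro ⟨⟨-, hsat⟩, hg⟩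
    classical
    have TF := tf_of_girth4 hg
    have hμ : ∀ a b : V, a ≠ b → ¬G.Adj a b → Fintype.card (G.commonNeighbors a b) = 2 :=
      fun a b h1 h2 => (exists_unique_iff_card TF h1 h2).mp (hsat a b h1 h2)
    have hnbot : G ≠ ⊥ := by
      rintro rfl
      rw [girth_bot] at hg
      omega
    have hnac : ¬G.IsAcyclic := by
      intro h
      rw [← girth_eq_zero] at h
      omega
    obtain ⟨a, w, hw, -⟩ := exists_girth_eq_length.mpr hnac
    have hcard3 := three_le_card_of_cycle w hw
    have hntop : G ≠ ⊤ := by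
      rintro rfl
      have h1 : 1 < Fintype.card V := by omega
      obtain ⟨b, hb⟩ := Fintype.exists_ne_of_one_lt_card h1 a
      have h2 : (((Finset.univ : Finset V).erase a).erase b).Nonempty := by
        rw [← Finset.card_pos, Finset.card_erase_of_mem
          (Finset.mem_erase.mpr ⟨hb, Finset.mem_univ b⟩),
          Finset.card_erase_of_mem (Finset.mem_univ a), Finset.card_univ]
        omega
      obtain ⟨c, hc⟩ := h2
      obtain ⟨hcb, hca, -⟩ : c ≠ b ∧ c ≠ a ∧ True := by
        obtain ⟨h3, h4⟩ := Finset.mem_erase.mp hc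
        exact ⟨h3, (Finset.mem_erase.mp h4).1, trivial⟩
      exact TF a b c ((top_adj a b).mpr (Ne.symm hb)) ((top_adj b c).mpr (Ne.symm hcb)) ((top_adj a c).mpr hca.symm)
    refine ⟨G.degree a, ⟨rfl, fun w' => deg_eq TF hμ w' a, ?_, fun p q hpq hnadj => hμ p q hpq hnadj⟩,
      hntop, hnbot⟩
    · intro p q hpq
      have : G.commonNeighbors p q = ∅ := by
        ext z
        simp only [Set.mem_empty_iff_false, iff_false]
        intro hz
        obtain ⟨h1, h2⟩ := (mem_commonNeighbors G).mp hz
        exact TF p z q h1 h2.symm hpq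
      simp [this]
  · rintro ⟨k, hsrg, hntop, -⟩
    have TF : ∀ a b c, G.Adj a b → G.Adj b c → G.Adj a c → False := by
      intro a b c hab hbc hac
      have h0 := hsrg.of_adj a b hab
      have hc : c ∈ G.commonNeighbors a b := (mem_commonNeighbors G).mpr ⟨hac, hbc⟩
      have : (0 : ℕ) < Fintype.card (G.commonNeighbors a b) := Fintype.card_pos_iff.mpr ⟨⟨c, hc⟩⟩
      omega
    obtain ⟨u, v, hne, hnadj⟩ : ∃ u v : V, u ≠ v ∧ ¬G.Adj u v := by
      by_contra h
      push_neg at h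
      apply hntop
      ext p q
      exact ⟨fun hpq => hpq.ne, fun hpq => h p q hpq⟩
    constructor
    · constructor
      · exact no_copy_of_triangleFree TF
      · intro p q hpq hnadj'
        exact (exists_unique_iff_card TF hpq hnadj').mpr (hsrg.of_not_adj hpq hnadj')
    · obtain ⟨x, y, hxy, hS⟩ := pair_of_card_two (hsrg.of_not_adj hne hnadj)
      have hx : x ∈ G.commonNeighbors u v := by rw [hS]; simp
      have hy : y ∈ G.commonNeighbors u v := by rw [hS]; simp
      obtain ⟨hux, hvx⟩ := (mem_commonNeighbors G).mp hx
      obtain ⟨huy, hvy⟩ := (mem_commonNeighbors G).mp hy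
      exact girth_eq_four' TF hux hvx.symm hvy huy.symm hne hxy
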